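/- Let (G,w) be a weighted graph. The weight w extends to a pseudoultrametric on V(G) (i.e., a symmetric function d with d(x,x)=0 satisfying d(x,y) ≤ max{d(x,z), d(z,y)} and d(u,v) = w({u,v}) on edges) if and only if every cycle C ⊆ G contains at least two distinct edges e₁, e₂ with w(e₁) = w(e₂) = max{w(e) : e ∈ E(C)}. -/

import Mathlib

open scoped NNReal
open SimpleGraph

namespace Stmt11Aux

variable {V : Type*}

/-- Max weight of a list of edges. -/
noncomputable def mW (w : Sym2 V → ℝ≥0) (l : List (Sym2 V)) : ℝ≥0 :=
  (l.map w).foldr (· ⊔ ·) 0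

lemma le_mW (w : Sym2 V → ℝ≥0) {l : List (Sym2 V)} {e : Sym2 V} (he : e ∈ l) :
    w e ≤ mW w l := by
  induction l with
  | nil => simp at he
  | cons a t ih =>
    rcases List.mem_cons.mp he with rfl | h
    · exact le_sup_left
    · exact le_trans (ih h) le_sup_right

lemma mW_le (w : Sym2 V → ℝ≥0) {l : List (Sym2 V)} {t : ℝ≥0} (h : ∀ e ∈ l, w e ≤ t) :
    mW w l ≤ t := by
  induction l with
  | nil => simp [mW]
  | cons a l ih =>
    exact sup_le (h a (by simp)) (ih fun e he => h e (by simp [he]))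

lemma mW_lt (w : Sym2 V → ℝ≥0) {l : List (Sym2 V)} {t : ℝ≥0} (ht : 0 < t)
    (h : ∀ e ∈ l, w e < t) : mW w l < t := by
  induction l with
  | nil => simpa [mW] using ht
  | cons a l ih =>
    exact sup_lt_iff.mpr ⟨h a (by simp), ih fun e he => h e (by simp [he])⟩

lemma mW_append (w : Sym2 V → ℝ≥0) (l₁ l₂ : List (Sym2 V)) :
    mW w (l₁ ++ l₂) = mW w l₁ ⊔ mW w l₂ := by
  induction l₁ with
  | nil => simp [mW]
  | cons a l ih =>
    show w a ⊔ mW w (l ++ l₂) = (w a ⊔ mW w l) ⊔ mW w l₂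
    rw [ih, sup_assoc]

lemma mW_reverse (w : Sym2 V → ℝ≥0) (l : List (Sym2 V)) :
    mW w l.reverse = mW w l := by
  refine le_antisymm (mW_le w fun e he => le_mW w ?_) (mW_le w fun e he => le_mW w ?_)
  · simpa using he
  · simpa using he

/-- A pseudoultrametric agreeing with `w` on edges is bounded along walks by the max
edge weight. -/
lemma d_walk {G : SimpleGraph V} {w : Sym2 V → ℝ≥0} {d : V → V → ℝ≥0}
    (h0 : ∀ x, d x x = 0)
    (hΔ : ∀ x y z, d x y ≤ max (d x z) (d z y))
    (hedge : ∀ u v, G.Adj u v → d u v = w s(u, v)) :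
    ∀ {x y : V} (p : G.Walk x y), d x y ≤ mW w p.edges := by
  intro x y p
  induction p with
  | nil => simp [h0, mW]
  | @cons a b c h p ih =>
    calc d a c ≤ max (d a b) (d b c) := hΔ a c b
      _ ≤ max (w s(a, b)) (mW w p.edges) := max_le_max (le_of_eq (hedge _ _ h)) ih
      _ = mW w (Walk.cons h p).edges := rfl

/-- Infimum over walks of the max edge weight. -/
noncomputable def d0 (G : SimpleGraph V) (w : Sym2 V → ℝ≥0) (x y : V) : ℝ≥0 :=
  sInf (Set.range fun p : G.Walk x y => mW w p.edges)

lemma d0_le {G : SimpleGraph V} (w : Sym2 V → ℝ≥0) {x y : V} (p : G.Walk x y) :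
    d0 G w x y ≤ mW w p.edges :=
  csInf_le (OrderBot.bddBelow _) ⟨p, rfl⟩

lemma d0_self {G : SimpleGraph V} (w : Sym2 V → ℝ≥0) (x : V) : d0 G w x x = 0 :=
  le_antisymm (by simpa [mW] using d0_le w (Walk.nil : G.Walk x x)) zero_le

lemma d0_symm {G : SimpleGraph V} (w : Sym2 V → ℝ≥0) (x y : V) :
    d0 G w x y = d0 G w y x := by
  have key : ∀ a b : V, d0 G w a b ≤ d0 G w b a := by
    intro a b
    by_cases h : G.Reachable b a
    · obtain ⟨p⟩ := h
      refine le_csInf ⟨_, ⟨p, rfl⟩⟩ ?_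
      rintro c ⟨q, rfl⟩
      calc d0 G w a b ≤ mW w q.reverse.edges := d0_le w q.reverse
        _ = mW w q.edges := by rw [Walk.edges_reverse, mW_reverse]
    · have h' : ¬ G.Reachable a b := fun hr => h hr.symm
      have hemp : (Set.range fun p : G.Walk a b => mW w p.edges) = ∅ := by
        rw [Set.range_eq_empty_iff]
        exact ⟨fun p => h' ⟨p⟩⟩
      simp [d0, hemp]
  exact le_antisymm (key x y) (key y x)

lemma d0_tri {G : SimpleGraph V} (w : Sym2 V → ℝ≥0) {x y z : V}
    (hxz : G.Reachable x z) (hzy : G.Reachable z y) :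
    d0 G w x y ≤ max (d0 G w x z) (d0 G w z y) := by
  by_contra hlt
  push_neg at hlt
  have h1 : d0 G w x z < d0 G w x y := (le_max_left _ _).trans_lt hlt
  have h2 : d0 G w z y < d0 G w x y := (le_max_right _ _).trans_lt hlt
  obtain ⟨p⟩ := hxz
  obtain ⟨q⟩ := hzy
  have hne1 : (Set.range fun p : G.Walk x z => mW w p.edges).Nonempty := ⟨_, ⟨p, rfl⟩⟩
  have hne2 : (Set.range fun p : G.Walk z y => mW w p.edges).Nonempty := ⟨_, ⟨q, rfl⟩⟩
  obtain ⟨a, ⟨p1, rfl⟩, ha⟩ := exists_lt_of_csInf_lt hne1 h1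
  obtain ⟨b, ⟨q1, rfl⟩, hb⟩ := exists_lt_of_csInf_lt hne2 h2
  have hle := d0_le w (p1.append q1)
  rw [Walk.edges_append, mW_append] at hle
  exact absurd (hle.trans_lt (max_lt ha hb)) (lt_irrefl _)

lemma d0_edge {G : SimpleGraph V} {w : Sym2 V → ℝ≥0}
    (H : ∀ (u : V) (c : G.Walk u u), c.IsCycle →
      ∃ e₁ ∈ c.edges, ∃ e₂ ∈ c.edges, e₁ ≠ e₂ ∧ w e₁ = w e₂ ∧
        ∀ e ∈ c.edges, w e ≤ w e₁)
    {u v : V} (h : G.Adj u v) : d0 G w u v = w s(u, v) := by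
  classical
  refine le_antisymm ?_ ?_
  · simpa [mW] using d0_le w (Walk.cons h (Walk.nil : G.Walk v v))
  · refine le_csInf ⟨_, ⟨Walk.cons h Walk.nil, rfl⟩⟩ ?_
    rintro b ⟨p, rfl⟩
    by_contra hlt
    push_neg at hlt
    have hq : mW w (↑p.toPath : G.Walk u v).edges < w s(u, v) :=
      lt_of_le_of_lt (mW_le w fun e he => le_mW w (Walk.edges_toPath_subset p he)) hlt
    have hnot : s(u, v) ∉ (↑p.toPath : G.Walk u v).edges := fun hmem =>
      absurd ((le_mW w hmem).trans_lt hq) (lt_irrefl _)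
    set r : G.Walk v u := (↑p.toPath : G.Walk u v).reverse with hrdef
    have hr : r.IsPath := (p.toPath).2.reverse
    have hnotr : s(u, v) ∉ r.edges := by
      rw [hrdef, Walk.edges_reverse, List.mem_reverse]
      exact hnot
    have hcyc : (Walk.cons h r).IsCycle := (Walk.cons_isCycle_iff r h).mpr ⟨hr, hnotr⟩
    obtain ⟨e₁, he₁, e₂, he₂, hne, hw, hmax⟩ := H u (Walk.cons h r) hcyc
    have hrlt : ∀ e ∈ r.edges, w e < w s(u, v) := by
      intro e he
      rw [hrdef, Walk.edges_reverse, List.mem_reverse] at he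
      exact (le_mW w he).trans_lt hq
    have huvle : w s(u, v) ≤ w e₁ := hmax _ (by simp)
    rcases List.mem_cons.mp he₁ with rfl | hin
    · rcases List.mem_cons.mp he₂ with rfl | hin2
      · exact hne rfl
      · exact absurd (hw ▸ huvle) (not_le.mpr (hrlt _ hin2))
    · exact absurd huvle (not_le.mpr (hrlt _ hin))

end Stmt11Aux

open Stmt11Aux

/-- `w` extends to a pseudoultrametric on `V(G)` iff every cycle of `G`
contains at least two distinct edges of maximal weight. -/
theorem stmt_11 {V : Type*} (G : SimpleGraph V) (w : Sym2 V → ℝ≥0) :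
    (∃ d : V → V → ℝ≥0,
        (∀ x y, d x y = d y x) ∧ (∀ x, d x x = 0) ∧
        (∀ x y z, d x y ≤ max (d x z) (d z y)) ∧
        ∀ u v, G.Adj u v → d u v = w s(u, v)) ↔
    (∀ (u : V) (c : G.Walk u u), c.IsCycle →
      ∃ e₁ ∈ c.edges, ∃ e₂ ∈ c.edges, e₁ ≠ e₂ ∧ w e₁ = w e₂ ∧
        ∀ e ∈ c.edges, w e ≤ w e₁) := by
  classical
  constructor
  · rintro ⟨d, hsymm, h0, hΔ, hedge⟩ u c hc
    -- pick a maximal weight edge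
    have hne : c.edges ≠ [] := by
      have h3 := hc.three_le_length
      intro hnil
      rw [← Walk.length_edges, hnil] at h3
      simp at h3
    have hfne : c.edges.toFinset.Nonempty := by
      simpa [List.toFinset_eq_empty_iff] using hne
    obtain ⟨e₁, he₁f, hmax'⟩ := Finset.exists_max_image c.edges.toFinset w hfne
    have he₁ : e₁ ∈ c.edges := List.mem_toFinset.mp he₁f
    have hmax : ∀ e ∈ c.edges, w e ≤ w e₁ := fun e he => hmax' e (List.mem_toFinset.mpr he)
    refine ⟨e₁, he₁, ?_⟩
    by_contra hno
    push_neg at hno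
    have key : ∀ e ∈ c.edges, e ≠ e₁ → w e < w e₁ := by
      intro e he hne'
      refine lt_of_le_of_ne (hmax e he) fun heq => ?_
      obtain ⟨e', he', hlt⟩ := hno e he (Ne.symm hne') heq.symm
      exact absurd (hmax e' he') (not_le.mpr hlt)
    have hnd : c.edges.Nodup := hc.isCircuit.isTrail.edges_nodup
    -- there is an edge distinct from e₁
    have hlen : 3 ≤ c.edges.length := by
      rw [Walk.length_edges]; exact hc.three_le_length
    obtain ⟨ea, l₁, hl₁⟩ := List.exists_cons_of_ne_nil hne
    have hl₁ne : l₁ ≠ [] := by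
      intro hnil
      rw [hl₁, hnil] at hlen
      simp at hlen
    obtain ⟨eb, l₂, hl₂⟩ := List.exists_cons_of_ne_nil hl₁ne
    have hab : ea ≠ eb := by
      rw [hl₁, hl₂] at hnd
      intro h
      exact (List.nodup_cons.mp hnd).1 (h ▸ List.mem_cons_self)
    have hex : ∃ e₂ ∈ c.edges, e₂ ≠ e₁ := by
      by_cases hae : ea = e₁
      · exact ⟨eb, by rw [hl₁, hl₂]; simp, fun h => hab (by rw [hae, h])⟩
      · exact ⟨ea, by rw [hl₁]; simp, hae⟩
    obtain ⟨e₂x, he₂x, hne₂x⟩ := hex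
    have hpos : 0 < w e₁ := by
      rcases (show 0 ≤ w e₁ from zero_le).lt_or_eq with h | h
      · exact h
      · exact absurd (key _ he₂x hne₂x) (by rw [← h]; simp)
    obtain ⟨x, y, rfl⟩ : ∃ x y, e₁ = s(x, y) := by
      obtain ⟨⟨x, y⟩, rfl⟩ := Quot.exists_rep e₁
      exact ⟨x, y, rfl⟩
    have hadj : G.Adj x y := Walk.adj_of_mem_edges c he₁
    have hxs : x ∈ c.support := Walk.fst_mem_support_of_mem_edges c he₁
    set c₂ := c.rotate x hxs with hc₂def
    have hc₂ : c₂.IsCycle := hc.rotate hxs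
    have hmem : ∀ e, e ∈ c₂.edges ↔ e ∈ c.edges := fun e =>
      (Walk.rotate_edges c x hxs).perm.mem_iff
    have he₁' : s(x, y) ∈ c₂.edges := (hmem _).mpr he₁
    have hys : y ∈ c₂.support := Walk.snd_mem_support_of_mem_edges _ he₁'
    have hedges2 : (c₂.takeUntil y hys).edges ++ (c₂.dropUntil y hys).edges = c₂.edges := by
      rw [← Walk.edges_append, Walk.take_spec]
    have hnd₂ : c₂.edges.Nodup := hc₂.isCircuit.isTrail.edges_nodup
    have hdisj : (c₂.takeUntil y hys).edges.Disjoint (c₂.dropUntil y hys).edges :=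
      List.disjoint_of_nodup_append (by rw [hedges2]; exact hnd₂)
    rcases List.mem_append.mp (by rw [hedges2]; exact he₁') with hq | hr
    · -- e₁ in the take part; use the drop part, a walk from y to x avoiding e₁
      have hbound := d_walk h0 hΔ hedge (c₂.dropUntil y hys)
      have hlt2 : mW w (c₂.dropUntil y hys).edges < w s(x, y) := by
        refine mW_lt w hpos fun e he => key e ?_ ?_
        · exact (hmem e).mp (by rw [← hedges2]; exact List.mem_append_right _ he)
        · intro h
          exact hdisj hq (h ▸ he)
      have : d y x < d y x := by
        calc d y x ≤ mW w (c₂.dropUntil y hys).edges := hbound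
          _ < w s(x, y) := hlt2
          _ = d y x := by rw [hsymm y x]; exact (hedge x y hadj).symm
      exact lt_irrefl _ this
    · -- e₁ in the drop part; use the take part, a walk from x to y avoiding e₁
      have hbound := d_walk h0 hΔ hedge (c₂.takeUntil y hys)
      have hlt2 : mW w (c₂.takeUntil y hys).edges < w s(x, y) := by
        refine mW_lt w hpos fun e he => key e ?_ ?_
        · exact (hmem e).mp (by rw [← hedges2]; exact List.mem_append_left _ he)
        · intro h
          exact hdisj (h ▸ he) hr
      have : d x y < d x y := by
        calc d x y ≤ mW w (c₂.takeUntil y hys).edges := hbound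
          _ < w s(x, y) := hlt2
          _ = d x y := (hedge x y hadj).symm
      exact lt_irrefl _ this
  · intro H
    set R : V → V := fun x => (G.connectedComponentMk x).out with hR
    have hrr : ∀ x, G.Reachable x (R x) := by
      intro x
      rw [← SimpleGraph.ConnectedComponent.eq]
      exact (Quot.out_eq _).symm
    have hre : ∀ x y, G.Reachable x y → R x = R y := by
      intro x y h
      simp only [hR]
      rw [SimpleGraph.ConnectedComponent.eq.mpr h]
    refine ⟨fun x y => if G.Reachable x y then d0 G w x y
        else d0 G w x (R x) ⊔ d0 G w y (R y) ⊔ 1, ?_, ?_, ?_, ?_⟩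
    · intro x y
      by_cases h : G.Reachable x y
      · simp only [if_pos h, if_pos h.symm]
        exact d0_symm w x y
      · simp only [if_neg h, if_neg fun h' => h (Reachable.symm h')]
        rw [sup_comm (d0 G w x (R x)) (d0 G w y (R y))]
    · intro x
      simp only [if_pos (Reachable.refl x)]
      exact d0_self w x
    · intro x y z
      by_cases hxy : G.Reachable x y <;> by_cases hxz : G.Reachable x z
      · have hzy : G.Reachable z y := hxz.symm.trans hxy
        simp only [if_pos hxy, if_pos hxz, if_pos hzy]
        exact d0_tri w hxz hzy
      · have hzy : ¬ G.Reachable z y := fun h => hxz (hxy.trans h.symm)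
        simp only [if_pos hxy, if_neg hxz, if_neg hzy]
        have h1 : d0 G w x y ≤ d0 G w x (R x) ⊔ d0 G w y (R y) := by
          calc d0 G w x y ≤ d0 G w x (R x) ⊔ d0 G w (R x) y :=
              d0_tri w (hrr x) ((hrr x).symm.trans hxy)
            _ = d0 G w x (R x) ⊔ d0 G w y (R y) := by
              rw [d0_symm w (R x) y, hre x y hxy]
        refine h1.trans (sup_le ?_ ?_)
        · exact le_sup_of_le_left (le_sup_of_le_left le_sup_left)
        · exact le_sup_of_le_right (le_sup_of_le_left le_sup_right)
      · have hzy : ¬ G.Reachable z y := fun h => hxy (hxz.trans h)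
        simp only [if_neg hxy, if_pos hxz, if_neg hzy]
        have hx : d0 G w x (R x) ≤ d0 G w x z ⊔ d0 G w z (R z) := by
          calc d0 G w x (R x) = d0 G w x (R z) := by rw [hre x z hxz]
            _ ≤ d0 G w x z ⊔ d0 G w z (R z) := d0_tri w hxz (hrr z)
        refine sup_le (sup_le ?_ ?_) ?_
        · exact hx.trans (sup_le le_sup_left
            (le_sup_of_le_right (le_sup_of_le_left le_sup_left)))
        · exact le_sup_of_le_right (le_sup_of_le_left le_sup_right)
        · exact le_sup_of_le_right le_sup_right
      · by_cases hzy : G.Reachable z y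
        · simp only [if_neg hxy, if_neg hxz, if_pos hzy]
          have hy : d0 G w y (R y) ≤ d0 G w z y ⊔ d0 G w z (R z) := by
            calc d0 G w y (R y) = d0 G w y (R z) := by rw [hre z y hzy]
              _ ≤ d0 G w y z ⊔ d0 G w z (R z) := d0_tri w hzy.symm (hrr z)
              _ = d0 G w z y ⊔ d0 G w z (R z) := by rw [d0_symm w y z]
          refine sup_le (sup_le ?_ ?_) ?_
          · exact le_sup_of_le_left (le_sup_of_le_left le_sup_left)
          · exact hy.trans (sup_le le_sup_right
              (le_sup_of_le_left (le_sup_of_le_left le_sup_right)))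
          · exact le_sup_of_le_left le_sup_right
        · simp only [if_neg hxy, if_neg hxz, if_neg hzy]
          refine sup_le (sup_le ?_ ?_) ?_
          · exact le_sup_of_le_left (le_sup_of_le_left le_sup_left)
          · exact le_sup_of_le_right (le_sup_of_le_left le_sup_right)
          · exact le_sup_of_le_left le_sup_right
    · intro a b hab
      simp only [if_pos hab.reachable]
      exact d0_edge H hab
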